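/- Distance interpretation of the unshifted weight: for all ω ∈ ℝ with 0 < |ωτ̄| (and τ̄ > 0), the distance from the origin 0 ∈ ℂ to the cut C(ωτ̄) equals 1/φ_τ̄(ω), where φ_τ̄(ω) = 2|sin(τ̄ω/2)| for |ωτ̄| ≤ π and 2 for |ωτ̄| > π, and C(φ) is the cut as defined before (half-line on Re = 1/2 starting at 1/2 - (i/2)cot(φ/2) for 0 < φ < 2π, the full line Re = 1/2 for |φ| ≥ 2π). -/

import Mathlib

open Complex Real Set

/-- The frequency-dependent cut `C(φ)`. -/
noncomputable def Cut (φ : ℝ) : Set ℂ :=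
  if φ = 0 then ∅
  else if 2 * Real.pi ≤ |φ| then {z : ℂ | z.re = 1 / 2}
  else if 0 < φ then
    {z : ℂ | ∃ t : ℝ, t ≤ -Real.cot (φ / 2) ∧ z = 1 / 2 + (t / 2 : ℝ) * Complex.I}
  else
    {z : ℂ | ∃ t : ℝ, -Real.cot (φ / 2) ≤ t ∧ z = 1 / 2 + (t / 2 : ℝ) * Complex.I}

lemma le_infDist' {s : Set ℂ} (hs : s.Nonempty) {d : ℝ}
    (h : ∀ y ∈ s, d ≤ dist (0:ℂ) y) : d ≤ Metric.infDist 0 s := by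
  by_contra h'
  push_neg at h'
  obtain ⟨y, hy, hlt⟩ := (Metric.infDist_lt_iff hs).mp h'
  exact absurd (h y hy) (not_le.mpr hlt)

lemma abs_pt (t : ℝ) : ‖((1 : ℂ) / 2 + (t / 2 : ℝ) * Complex.I)‖
    = Real.sqrt (1 / 4 + t ^ 2 / 4) := by
  rw [Complex.norm_def, Complex.normSq_apply]
  simp
  ring_nf

lemma dist_pt (t : ℝ) : dist (0 : ℂ) ((1 : ℂ) / 2 + (t / 2 : ℝ) * Complex.I)
    = Real.sqrt (1 / 4 + t ^ 2 / 4) := by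
  rw [dist_comm, Complex.dist_eq, sub_zero, abs_pt]

lemma dist_pt0 : dist (0 : ℂ) ((1 : ℂ) / 2 + ((0:ℝ) / 2 : ℝ) * Complex.I) = 1/2 := by
  rw [dist_pt, show (1:ℝ)/4 + 0^2/4 = (1/2)^2 by norm_num, Real.sqrt_sq (by norm_num)]

lemma re_lb (z : ℂ) (h : z.re = 1 / 2) : (1 : ℝ) / 2 ≤ dist (0 : ℂ) z := by
  rw [dist_comm, Complex.dist_eq, sub_zero]
  calc (1:ℝ)/2 = |z.re| := by rw [h, abs_of_pos]; norm_num
  _ ≤ ‖z‖ := Complex.abs_re_le_norm z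

lemma pt_mem_re (t : ℝ) : ((1:ℂ)/2 + (t/2 : ℝ) * Complex.I).re = 1/2 := by
  simp [Complex.add_re, Complex.div_re]

lemma aux_line : Metric.infDist (0 : ℂ) {z : ℂ | z.re = 1 / 2} = 1 / 2 := by
  apply le_antisymm
  · have hm : ((1:ℂ)/2 + ((0:ℝ)/2 : ℝ) * Complex.I) ∈ {z : ℂ | z.re = 1/2} := pt_mem_re 0
    calc Metric.infDist (0 : ℂ) {z : ℂ | z.re = 1 / 2}
        ≤ dist 0 ((1:ℂ)/2 + ((0:ℝ)/2 : ℝ) * Complex.I) := Metric.infDist_le_dist_of_mem hm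
      _ = 1/2 := dist_pt0
  · exact le_infDist' ⟨_, pt_mem_re 0⟩ (fun z hz => re_lb z hz)

lemma aux1 (t₀ : ℝ) (h : t₀ ≤ 0) :
    Metric.infDist (0:ℂ) {z : ℂ | ∃ t : ℝ, t ≤ t₀ ∧ z = 1 / 2 + (t / 2 : ℝ) * Complex.I}
      = Real.sqrt (1 / 4 + t₀ ^ 2 / 4) := by
  have hm : ((1:ℂ)/2 + (t₀/2 : ℝ) * Complex.I) ∈
      {z : ℂ | ∃ t : ℝ, t ≤ t₀ ∧ z = 1 / 2 + (t / 2 : ℝ) * Complex.I} := ⟨t₀, le_rfl, rfl⟩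
  apply le_antisymm
  · calc Metric.infDist (0:ℂ) _ ≤ dist 0 ((1:ℂ)/2 + (t₀/2 : ℝ) * Complex.I) :=
        Metric.infDist_le_dist_of_mem hm
      _ = _ := dist_pt t₀
  · refine le_infDist' ⟨_, hm⟩ ?_
    rintro z ⟨t, ht, rfl⟩
    rw [dist_pt]
    apply Real.sqrt_le_sqrt
    have : t₀ ^ 2 ≤ t ^ 2 := by nlinarith
    linarith

lemma aux2 (t₀ : ℝ) (h : 0 ≤ t₀) :
    Metric.infDist (0:ℂ) {z : ℂ | ∃ t : ℝ, t ≤ t₀ ∧ z = 1 / 2 + (t / 2 : ℝ) * Complex.I}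
      = 1 / 2 := by
  have hm : ((1:ℂ)/2 + ((0:ℝ)/2 : ℝ) * Complex.I) ∈
      {z : ℂ | ∃ t : ℝ, t ≤ t₀ ∧ z = 1 / 2 + (t / 2 : ℝ) * Complex.I} := ⟨0, h, rfl⟩
  apply le_antisymm
  · calc Metric.infDist (0:ℂ) _ ≤ dist 0 ((1:ℂ)/2 + ((0:ℝ)/2 : ℝ) * Complex.I) :=
        Metric.infDist_le_dist_of_mem hm
      _ = 1/2 := dist_pt0
  · refine le_infDist' ⟨_, hm⟩ ?_
    rintro z ⟨t, ht, rfl⟩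
    exact re_lb _ (pt_mem_re t)

lemma aux1' (t₀ : ℝ) (h : 0 ≤ t₀) :
    Metric.infDist (0:ℂ) {z : ℂ | ∃ t : ℝ, t₀ ≤ t ∧ z = 1 / 2 + (t / 2 : ℝ) * Complex.I}
      = Real.sqrt (1 / 4 + t₀ ^ 2 / 4) := by
  have hm : ((1:ℂ)/2 + (t₀/2 : ℝ) * Complex.I) ∈
      {z : ℂ | ∃ t : ℝ, t₀ ≤ t ∧ z = 1 / 2 + (t / 2 : ℝ) * Complex.I} := ⟨t₀, le_rfl, rfl⟩
  apply le_antisymm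
  · calc Metric.infDist (0:ℂ) _ ≤ dist 0 ((1:ℂ)/2 + (t₀/2 : ℝ) * Complex.I) :=
        Metric.infDist_le_dist_of_mem hm
      _ = _ := dist_pt t₀
  · refine le_infDist' ⟨_, hm⟩ ?_
    rintro z ⟨t, ht, rfl⟩
    rw [dist_pt]
    apply Real.sqrt_le_sqrt
    have : t₀ ^ 2 ≤ t ^ 2 := by nlinarith
    linarith

lemma aux2' (t₀ : ℝ) (h : t₀ ≤ 0) :
    Metric.infDist (0:ℂ) {z : ℂ | ∃ t : ℝ, t₀ ≤ t ∧ z = 1 / 2 + (t / 2 : ℝ) * Complex.I}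
      = 1 / 2 := by
  have hm : ((1:ℂ)/2 + ((0:ℝ)/2 : ℝ) * Complex.I) ∈
      {z : ℂ | ∃ t : ℝ, t₀ ≤ t ∧ z = 1 / 2 + (t / 2 : ℝ) * Complex.I} := ⟨0, h, rfl⟩
  apply le_antisymm
  · calc Metric.infDist (0:ℂ) _ ≤ dist 0 ((1:ℂ)/2 + ((0:ℝ)/2 : ℝ) * Complex.I) :=
        Metric.infDist_le_dist_of_mem hm
      _ = 1/2 := dist_pt0
  · refine le_infDist' ⟨_, hm⟩ ?_
    rintro z ⟨t, ht, rfl⟩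
    exact re_lb _ (pt_mem_re t)

lemma sqrt_cot (x : ℝ) (hx : Real.sin x ≠ 0) :
    Real.sqrt (1 / 4 + (Real.cot x) ^ 2 / 4) = 1 / (2 * |Real.sin x|) := by
  have h1 : 1 / 4 + (Real.cot x) ^ 2 / 4 = (1 / (2 * |Real.sin x|)) ^ 2 := by
    rw [Real.cot_eq_cos_div_sin]
    have h2 : (Real.sin x) ^ 2 ≠ 0 := pow_ne_zero _ hx
    have h3 : |Real.sin x| ≠ 0 := abs_ne_zero.mpr hx
    field_simp
    rw [_root_.sq_abs]
    nlinarith [Real.sin_sq_add_cos_sq x]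
  rw [h1, Real.sqrt_sq (by positivity)]

/-- Distance interpretation of the unshifted weight: for `ωτ̄ ≠ 0`, the distance
from the origin to the cut `C(ωτ̄)` equals `1/φ_τ̄(ω)`, where
`φ_τ̄(ω) = 2|sin(τ̄ω/2)|` for `|ωτ̄| ≤ π` and `2` otherwise. -/
theorem stmt16 (ω τb : ℝ) (hτb : 0 < τb) (hωτ : ω * τb ≠ 0) :
    Metric.infDist (0 : ℂ) (Cut (ω * τb))
      = 1 / (if |ω * τb| ≤ Real.pi then 2 * |Real.sin (τb * ω / 2)| else 2) := by
  set φ := ω * τb with hφ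
  have hτω : τb * ω = φ := by rw [hφ]; ring
  rw [hτω]
  unfold Cut
  rw [if_neg hωτ]
  have hpi := Real.pi_pos
  by_cases h2 : 2 * Real.pi ≤ |φ|
  · rw [if_pos h2, if_neg (by push_neg; linarith), aux_line]
  · rw [if_neg h2]
    push_neg at h2
    by_cases hpos : 0 < φ
    · rw [if_pos hpos]
      have habs : |φ| = φ := abs_of_pos hpos
      have hs : 0 < Real.sin (φ / 2) :=
        Real.sin_pos_of_pos_of_lt_pi (by linarith) (by rw [habs] at h2; linarith)
      by_cases hle : |φ| ≤ Real.pi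
      · rw [if_pos hle]
        rw [habs] at hle
        have hc : 0 ≤ Real.cos (φ / 2) :=
          Real.cos_nonneg_of_mem_Icc ⟨by linarith, by linarith⟩
        have hcot : 0 ≤ Real.cot (φ / 2) := by
          rw [Real.cot_eq_cos_div_sin]; positivity
        rw [aux1 _ (by linarith), show (-Real.cot (φ/2))^2 = (Real.cot (φ/2))^2 by ring,
          sqrt_cot _ hs.ne']
      · rw [if_neg hle]
        rw [habs] at hle
        push_neg at hle
        have hc : Real.cos (φ / 2) ≤ 0 :=
          Real.cos_nonpos_of_pi_div_two_le_of_le (by linarith) (by rw [habs] at h2; linarith)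
        have hcot : Real.cot (φ / 2) ≤ 0 := by
          rw [Real.cot_eq_cos_div_sin]
          exact div_nonpos_of_nonpos_of_nonneg hc hs.le
        rw [aux2 _ (by linarith)]
    · push_neg at hpos
      rw [if_neg (not_lt.mpr hpos)]
      have hneg : φ < 0 := lt_of_le_of_ne hpos hωτ
      have habs : |φ| = -φ := abs_of_neg hneg
      have hs : Real.sin (φ / 2) < 0 := by
        have := Real.sin_pos_of_pos_of_lt_pi (x := -φ/2) (by linarith)
          (by rw [habs] at h2; linarith)
        have h' : 0 < Real.sin (-(φ/2)) := by rw [show -(φ/2) = -φ/2 by ring]; exact this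
        rw [Real.sin_neg] at h'; linarith
      by_cases hle : |φ| ≤ Real.pi
      · rw [if_pos hle]
        rw [habs] at hle
        have hc : 0 ≤ Real.cos (φ / 2) :=
          Real.cos_nonneg_of_mem_Icc ⟨by linarith, by linarith⟩
        have hcot : Real.cot (φ / 2) ≤ 0 := by
          rw [Real.cot_eq_cos_div_sin]
          exact div_nonpos_of_nonneg_of_nonpos hc hs.le
        rw [aux1' _ (by linarith), show (-Real.cot (φ/2))^2 = (Real.cot (φ/2))^2 by ring,
          sqrt_cot _ hs.ne]
      · rw [if_neg hle]
        rw [habs] at hle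
        push_neg at hle
        have hc : Real.cos (φ / 2) ≤ 0 := by
          have : Real.cos (-(φ/2)) ≤ 0 :=
            Real.cos_nonpos_of_pi_div_two_le_of_le (by linarith) (by rw [habs] at h2; linarith)
          rwa [Real.cos_neg] at this
        have hcot : 0 ≤ Real.cot (φ / 2) := by
          rw [Real.cot_eq_cos_div_sin]
          have := div_nonneg (neg_nonneg.mpr hc) (neg_nonneg.mpr hs.le)
          rwa [neg_div_neg_eq] at this
        rw [aux2' _ (by linarith)]
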